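/- Let h > 0, δ ∈ [0,1], and 0 ≤ τ ≤ τ_M := h/(√2·(1−δ) + δ). Then for every u : ℤ × ℤ → ℝ and every (i,j) ∈ ℤ × ℤ, the explicit dilation update u'(i,j) := u(i,j) + τ·(D u)(i,j) satisfies u(i,j) ≤ u'(i,j) ≤ max_{(a,b)∈{−1,0,1}²} u(i+a, j+b). Consequently, if m ≤ u ≤ M pointwise, then m ≤ u' ≤ M pointwise. -/

import Mathlib

/-- The weighted Rouy–Tourin discretisation of the dilation speed `|∇u|`. -/
noncomputable def dilationSpeed (h δ : ℝ) (u : ℤ × ℤ → ℝ) (p : ℤ × ℤ) : ℝ :=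
  ((1 - δ) / h) *
      Real.sqrt
        ((max (u (p.1 + 1, p.2) - u p) (max (u (p.1 - 1, p.2) - u p) 0)) ^ 2
          + (max (u (p.1, p.2 + 1) - u p) (max (u (p.1, p.2 - 1) - u p) 0)) ^ 2)
    + (δ / (Real.sqrt 2 * h)) *
      Real.sqrt
        ((max (u (p.1 + 1, p.2 + 1) - u p) (max (u (p.1 - 1, p.2 - 1) - u p) 0)) ^ 2
          + (max (u (p.1 - 1, p.2 + 1) - u p) (max (u (p.1 + 1, p.2 - 1) - u p) 0)) ^ 2)

/-- The set of offsets `{-1,0,1} × {-1,0,1}` describing the 3×3 neighbourhood. -/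
noncomputable def offsets : Finset (ℤ × ℤ) := (Finset.Icc (-1 : ℤ) 1) ×ˢ (Finset.Icc (-1 : ℤ) 1)

lemma offsets_nonempty : offsets.Nonempty := ⟨(0, 0), by decide⟩

lemma sqrt_pair_le {a b s : ℝ} (ha0 : 0 ≤ a) (ha : a ≤ s) (hb0 : 0 ≤ b) (hb : b ≤ s) :
    Real.sqrt (a ^ 2 + b ^ 2) ≤ Real.sqrt 2 * s := by
  have hs : 0 ≤ s := le_trans ha0 ha
  have h1 : a ^ 2 + b ^ 2 ≤ 2 * s ^ 2 := by nlinarith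
  calc Real.sqrt (a ^ 2 + b ^ 2) ≤ Real.sqrt (2 * s ^ 2) := Real.sqrt_le_sqrt h1
    _ = Real.sqrt 2 * s := by
        rw [Real.sqrt_mul (by norm_num), Real.sqrt_sq hs]

theorem dilation_update_bounds
    (h δ τ : ℝ) (hh : 0 < h) (hδ : δ ∈ Set.Icc (0 : ℝ) 1)
    (hτ0 : 0 ≤ τ) (hτ : τ ≤ h / (Real.sqrt 2 * (1 - δ) + δ))
    (u : ℤ × ℤ → ℝ) :
    (∀ p : ℤ × ℤ,
        u p ≤ u p + τ * dilationSpeed h δ u p ∧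
          u p + τ * dilationSpeed h δ u p
            ≤ offsets.sup' offsets_nonempty (fun q => u (p.1 + q.1, p.2 + q.2))) ∧
      (∀ m M : ℝ, (∀ p, m ≤ u p ∧ u p ≤ M) →
        ∀ p, m ≤ u p + τ * dilationSpeed h δ u p ∧ u p + τ * dilationSpeed h δ u p ≤ M) := by
  obtain ⟨hδ0, hδ1⟩ := hδ
  have hs2 : (0:ℝ) < Real.sqrt 2 := Real.sqrt_pos.mpr (by norm_num)
  have hs2ge1 : (1:ℝ) ≤ Real.sqrt 2 := by
    rw [show (1:ℝ) = Real.sqrt 1 by simp]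
    exact Real.sqrt_le_sqrt (by norm_num)
  set K := Real.sqrt 2 * (1 - δ) + δ with hK
  have hKpos : 0 < K := by nlinarith
  -- nonnegativity of coefficients
  have hc1 : 0 ≤ (1 - δ) / h := div_nonneg (by linarith) hh.le
  have hc2 : 0 ≤ δ / (Real.sqrt 2 * h) := div_nonneg hδ0 (by positivity)
  have hDnonneg : ∀ p, 0 ≤ dilationSpeed h δ u p := fun p => by
    unfold dilationSpeed
    have := Real.sqrt_nonneg ((max (u (p.1 + 1, p.2) - u p) (max (u (p.1 - 1, p.2) - u p) 0)) ^ 2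
          + (max (u (p.1, p.2 + 1) - u p) (max (u (p.1, p.2 - 1) - u p) 0)) ^ 2)
    positivity
  have key : ∀ p : ℤ × ℤ,
      u p + τ * dilationSpeed h δ u p
        ≤ offsets.sup' offsets_nonempty (fun q => u (p.1 + q.1, p.2 + q.2)) := by
    intro p
    set S := offsets.sup' offsets_nonempty (fun q => u (p.1 + q.1, p.2 + q.2)) with hS
    have hmem : ∀ a b : ℤ, a ∈ Finset.Icc (-1:ℤ) 1 → b ∈ Finset.Icc (-1:ℤ) 1 →
        u (p.1 + a, p.2 + b) ≤ S := by
      intro a b ha hb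
      exact Finset.le_sup' (f := fun q => u (p.1 + q.1, p.2 + q.2))
        (show (a, b) ∈ offsets from Finset.mem_product.mpr ⟨ha, hb⟩)
    have hup : u p ≤ S := by
      have := hmem 0 0 (by decide) (by decide)
      simpa using this
    set s := S - u p with hsdef
    have hs0 : 0 ≤ s := by linarith
    -- bound each of the four max terms by s
    have hbound : ∀ a b : ℤ, a ∈ Finset.Icc (-1:ℤ) 1 → b ∈ Finset.Icc (-1:ℤ) 1 →
        max (u (p.1 + a, p.2 + b) - u p) (max (u (p.1 - a, p.2 - b) - u p) 0) ≤ s := by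
      intro a b ha hb
      have h1 : u (p.1 + a, p.2 + b) ≤ S := hmem a b ha hb
      have h2 : u (p.1 - a, p.2 - b) ≤ S := by
        have := hmem (-a) (-b) (by simp at ha ⊢; omega) (by simp at hb ⊢; omega)
        simpa [sub_eq_add_neg] using this
      simp only [max_le_iff]
      refine ⟨by linarith, by linarith, hs0⟩
    have hnn : ∀ x y : ℝ, (0:ℝ) ≤ max x (max y 0) := fun x y =>
      le_max_of_le_right (le_max_right _ _)
    have hD : dilationSpeed h δ u p ≤ K * s / h := by
      unfold dilationSpeed
      have b1 : max (u (p.1 + 1, p.2) - u p) (max (u (p.1 - 1, p.2) - u p) 0) ≤ s := by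
        have := hbound 1 0 (by decide) (by decide)
        simpa using this
      have b2 : max (u (p.1, p.2 + 1) - u p) (max (u (p.1, p.2 - 1) - u p) 0) ≤ s := by
        have := hbound 0 1 (by decide) (by decide)
        simpa using this
      have b3 := hbound 1 1 (by decide) (by decide)
      have b4 : max (u (p.1 - 1, p.2 + 1) - u p) (max (u (p.1 + 1, p.2 - 1) - u p) 0) ≤ s := by
        have := hbound (-1) 1 (by decide) (by decide)
        simpa [sub_eq_add_neg, sub_neg_eq_add] using this
      have s1 := sqrt_pair_le (hnn _ _) b1 (hnn _ _) b2
      have s2 := sqrt_pair_le (hnn _ _) b3 (hnn _ _) b4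
      have e1 : ((1 - δ) / h) * (Real.sqrt 2 * s) = Real.sqrt 2 * (1 - δ) * s / h := by
        ring
      have e2 : (δ / (Real.sqrt 2 * h)) * (Real.sqrt 2 * s) = δ * s / h := by
        field_simp
      calc ((1 - δ) / h) * _ + (δ / (Real.sqrt 2 * h)) * _
          ≤ ((1 - δ) / h) * (Real.sqrt 2 * s) + (δ / (Real.sqrt 2 * h)) * (Real.sqrt 2 * s) :=
            add_le_add (mul_le_mul_of_nonneg_left s1 hc1) (mul_le_mul_of_nonneg_left s2 hc2)
        _ = K * s / h := by rw [e1, e2, hK]; ring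
    have hτD : τ * dilationSpeed h δ u p ≤ s := by
      calc τ * dilationSpeed h δ u p ≤ (h / K) * (K * s / h) := by
            apply mul_le_mul hτ hD (hDnonneg p) (by positivity)
        _ = s := by field_simp
    linarith
  have first : ∀ p : ℤ × ℤ,
      u p ≤ u p + τ * dilationSpeed h δ u p ∧
        u p + τ * dilationSpeed h δ u p
          ≤ offsets.sup' offsets_nonempty (fun q => u (p.1 + q.1, p.2 + q.2)) := by
    intro p
    refine ⟨le_add_of_nonneg_right (mul_nonneg hτ0 (hDnonneg p)), key p⟩
  refine ⟨first, ?_⟩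
  intro m M hmM p
  refine ⟨le_trans (hmM p).1 (first p).1, le_trans (first p).2 ?_⟩
  apply Finset.sup'_le
  intro q _
  exact (hmM _).2
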